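/- Let Ω be a set, I a nonempty index set, and f, g : I → Ω → ℝ two families of functions taking values in [0,1]. Fix points δ_1, …, δ_N ∈ Ω, and for any family h : I → Ω → ℝ define its empirical Rademacher complexity as R̂(h) = E_{(σ_1,…,σ_N)} [ sup_{i ∈ I} (1/N) ∑_{j=1}^N σ_j · h(i)(δ_j) ], where σ_1, …, σ_N are i.i.d. uniform on {−1, +1}. Then the family of pointwise maxima, i ↦ (ω ↦ max(f(i)(ω), g(i)(ω))), satisfies R̂(max(f,g)) ≤ R̂(f) + R̂(g). -/

import Mathlib

set_option linter.unusedSectionVars false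
set_option maxHeartbeats 1000000
open Finset

noncomputable def sRad {I : Type*} (N : ℕ) (v : I → Fin N → ℝ) : ℝ :=
  ∑ σ : Fin N → Bool, ⨆ i : I, ∑ j : Fin N, (if σ j then (1 : ℝ) else -1) * v i j

section two
variable {I : Type*} [Nonempty I]

lemma twopoint (a t : I → ℝ) {C : ℝ} (h : ∀ i, |a i| + |t i| ≤ C) :
    (⨆ i, a i + |t i|) + (⨆ i, a i - |t i|)
      ≤ (⨆ i, a i + t i) + (⨆ i, a i - t i) := by
  have bdd1 : BddAbove (Set.range fun i => a i + t i) := by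
    refine ⟨C, ?_⟩; rintro _ ⟨i, rfl⟩
    show a i + t i ≤ C
    have := h i; have := le_abs_self (a i); have := le_abs_self (t i); linarith
  have bdd2 : BddAbove (Set.range fun i => a i - t i) := by
    refine ⟨C, ?_⟩; rintro _ ⟨i, rfl⟩
    show a i - t i ≤ C
    have := h i; have := le_abs_self (a i); have := neg_abs_le (t i); linarith
  have hY1 : (⨆ i, a i - |t i|) ≤ ⨆ i, a i + t i :=
    ciSup_le fun i => le_trans (by have := neg_abs_le (t i); linarith) (le_ciSup bdd1 i)
  have hY2 : (⨆ i, a i - |t i|) ≤ ⨆ i, a i - t i :=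
    ciSup_le fun i => le_trans (by have := le_abs_self (t i); linarith) (le_ciSup bdd2 i)
  have main : (⨆ i, a i + |t i|)
      ≤ (⨆ i, a i + t i) + (⨆ i, a i - t i) - (⨆ i, a i - |t i|) := by
    refine ciSup_le fun i => ?_
    rcases le_total 0 (t i) with ht | ht
    · have h1 : a i + |t i| = a i + t i := by rw [abs_of_nonneg ht]
      have h2 : a i + t i ≤ ⨆ i, a i + t i := le_ciSup bdd1 i
      linarith
    · have h1 : a i + |t i| = a i - t i := by rw [abs_of_nonpos ht]; ring
      have h2 : a i - t i ≤ ⨆ i, a i - t i := le_ciSup bdd2 i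
      linarith
  linarith

lemma twopoint' (a t : I → ℝ) (e : ℝ) (he : e = 1 ∨ e = -1) {C : ℝ}
    (h : ∀ i, |a i| + |t i| ≤ C) :
    (⨆ i, a i + e * |t i|) + (⨆ i, a i - e * |t i|)
      ≤ (⨆ i, a i + e * t i) + (⨆ i, a i - e * t i) := by
  rcases he with rfl | rfl
  · simp only [one_mul]; exact twopoint a t h
  · have h' : ∀ i, |a i| + |(-t i)| ≤ C := fun i => by rw [abs_neg]; exact h i
    have key := twopoint a (fun i => -t i) h'
    simp only [abs_neg] at key
    have e1 : (⨆ i, a i + (-1 : ℝ) * |t i|) = ⨆ i, a i - |t i| :=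
      iSup_congr fun i => by ring
    have e2 : (⨆ i, a i - (-1 : ℝ) * |t i|) = ⨆ i, a i + |t i| :=
      iSup_congr fun i => by ring
    have e3 : (⨆ i, a i + (-1 : ℝ) * t i) = ⨆ i, a i + -t i :=
      iSup_congr fun i => by ring
    have e4 : (⨆ i, a i - (-1 : ℝ) * t i) = ⨆ i, a i - -t i :=
      iSup_congr fun i => by ring
    rw [e1, e2, e3, e4]
    linarith
end two

section one
variable {I : Type*} [Nonempty I] {N : ℕ}

lemma abs_a_bound {v : I → Fin N → ℝ} {C : ℝ} (hv : ∀ i j, |v i j| ≤ C) (hC : 0 ≤ C)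
    (σ : Fin N → Bool) (k : Fin N) (i : I) :
    |∑ j ∈ univ.erase k, (if σ j then (1:ℝ) else -1) * v i j| ≤ N * C := by
  calc |∑ j ∈ univ.erase k, (if σ j then (1:ℝ) else -1) * v i j|
      ≤ ∑ j ∈ univ.erase k, |(if σ j then (1:ℝ) else -1) * v i j| :=
        Finset.abs_sum_le_sum_abs _ _
    _ ≤ ∑ _j ∈ univ.erase k, C := Finset.sum_le_sum fun j _ => by
        have : |(if σ j then (1:ℝ) else -1)| = 1 := by rcases Bool.eq_false_or_eq_true (σ j) with h | h <;> simp [h]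
        rw [abs_mul, this, one_mul]; exact hv i j
    _ = (univ.erase k).card * C := by rw [Finset.sum_const, nsmul_eq_mul]
    _ ≤ N * C := by
        refine mul_le_mul_of_nonneg_right ?_ hC
        have := Finset.card_erase_le (a := k) (s := (univ : Finset (Fin N)))
        exact_mod_cast le_trans (Nat.cast_le.mpr this) (by simp)

lemma sRad_onecoord {v : I → Fin N → ℝ} {C : ℝ} (hv : ∀ i j, |v i j| ≤ C) (k : Fin N) :
    sRad N (fun i j => if j = k then |v i j| else v i j) ≤ sRad N v := by
  have hC : 0 ≤ C := le_trans (abs_nonneg _) (hv (Classical.arbitrary I) k)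
  set flip := fun σ : Fin N → Bool => Function.update σ k (!σ k) with hflipdef
  have flipflip : ∀ σ, flip (flip σ) = σ := by
    intro σ; funext j
    rcases eq_or_ne j k with rfl | hj
    · simp [flip, Function.update_self]
    · simp [flip, Function.update_of_ne hj]
  have hsum : ∀ G : (Fin N → Bool) → ℝ, ∑ σ, G (flip σ) = ∑ σ, G σ :=
    fun G => Fintype.sum_equiv ⟨flip, flip, flipflip, flipflip⟩ _ _ fun σ => rfl
  have term : ∀ σ : Fin N → Bool,
      (⨆ i : I, ∑ j, (if σ j then (1:ℝ) else -1) * (if j = k then |v i j| else v i j))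
        + (⨆ i : I, ∑ j, (if flip σ j then (1:ℝ) else -1) * (if j = k then |v i j| else v i j))
      ≤ (⨆ i : I, ∑ j, (if σ j then (1:ℝ) else -1) * v i j)
        + (⨆ i : I, ∑ j, (if flip σ j then (1:ℝ) else -1) * v i j) := by
    intro σ
    set e : ℝ := if σ k then (1:ℝ) else -1 with hedef
    have he : e = 1 ∨ e = -1 := by
      rcases Bool.eq_false_or_eq_true (σ k) with h | h
      · left; simp [hedef, h]
      · right; simp [hedef, h]

    set a : I → ℝ := fun i => ∑ j ∈ univ.erase k, (if σ j then (1:ℝ) else -1) * v i j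
      with hadef
    set t : I → ℝ := fun i => v i k with htdef
    have hat : ∀ i, |a i| + |t i| ≤ N * C + C := fun i =>
      add_le_add (abs_a_bound hv hC σ k i) (hv i k)
    have hek : (if flip σ k then (1:ℝ) else -1) = -e := by
      have : flip σ k = !σ k := Function.update_self k (!σ k) σ
      rw [this]
      rcases Bool.eq_false_or_eq_true (σ k) with h | h <;> simp [hedef, h]
    have hfj : ∀ j, j ≠ k → flip σ j = σ j := fun j hj => Function.update_of_ne hj _ _
    have d1 : ∀ i, (∑ j, (if σ j then (1:ℝ) else -1) * (if j = k then |v i j| else v i j))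
        = a i + e * |t i| := by
      intro i
      rw [← Finset.sum_erase_add univ _ (mem_univ k)]
      congr 1
      · exact Finset.sum_congr rfl fun j hj => by
          rw [if_neg (Finset.mem_erase.mp hj).1]
      · rw [if_pos rfl]
    have d2 : ∀ i, (∑ j, (if flip σ j then (1:ℝ) else -1) * (if j = k then |v i j| else v i j))
        = a i - e * |t i| := by
      intro i
      rw [← Finset.sum_erase_add univ _ (mem_univ k)]
      rw [sub_eq_add_neg]
      congr 1
      · exact Finset.sum_congr rfl fun j hj => by
          rw [if_neg (Finset.mem_erase.mp hj).1, hfj j (Finset.mem_erase.mp hj).1]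
      · rw [hek, if_pos rfl]
        have ht : t i = v i k := rfl
        rw [← ht]; ring
    have d3 : ∀ i, (∑ j, (if σ j then (1:ℝ) else -1) * v i j) = a i + e * t i := by
      intro i
      rw [← Finset.sum_erase_add univ _ (mem_univ k)]
    have d4 : ∀ i, (∑ j, (if flip σ j then (1:ℝ) else -1) * v i j) = a i - e * t i := by
      intro i
      rw [← Finset.sum_erase_add univ _ (mem_univ k)]
      rw [sub_eq_add_neg]
      congr 1
      · exact Finset.sum_congr rfl fun j hj => by
          rw [hfj j (Finset.mem_erase.mp hj).1]
      · have ht : t i = v i k := rfl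
        rw [hek, ← ht]; ring
    rw [iSup_congr d1, iSup_congr d2, iSup_congr d3, iSup_congr d4]
    exact twopoint' a t e he hat
  have eL : sRad N (fun i j => if j = k then |v i j| else v i j)
      = ∑ σ : Fin N → Bool, ⨆ i : I,
          ∑ j, (if σ j then (1:ℝ) else -1) * (if j = k then |v i j| else v i j) := rfl
  have eR : sRad N v
      = ∑ σ : Fin N → Bool, ⨆ i : I, ∑ j, (if σ j then (1:ℝ) else -1) * v i j := rfl
  have key : sRad N (fun i j => if j = k then |v i j| else v i j)
        + sRad N (fun i j => if j = k then |v i j| else v i j)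
      ≤ sRad N v + sRad N v := by
    rw [eL, eR]
    nth_rewrite 2 [← hsum fun σ => ⨆ i : I,
      ∑ j, (if σ j then (1:ℝ) else -1) * (if j = k then |v i j| else v i j)]
    nth_rewrite 2 [← hsum fun σ => ⨆ i : I, ∑ j, (if σ j then (1:ℝ) else -1) * v i j]
    rw [← Finset.sum_add_distrib, ← Finset.sum_add_distrib]
    exact Finset.sum_le_sum fun σ _ => term σ
  linarith
end one

section more
variable {I : Type*} [Nonempty I] {N : ℕ}

lemma sgn_bound (b : Bool) (x : ℝ) : |(if b then (1:ℝ) else -1) * x| = |x| := by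
  rcases Bool.eq_false_or_eq_true b with h | h <;> simp [h]

lemma sum_bound {v : I → Fin N → ℝ} {C : ℝ} (hv : ∀ i j, |v i j| ≤ C)
    (σ : Fin N → Bool) (i : I) :
    |∑ j : Fin N, (if σ j then (1:ℝ) else -1) * v i j| ≤ N * C := by
  calc |∑ j : Fin N, (if σ j then (1:ℝ) else -1) * v i j|
      ≤ ∑ j : Fin N, |(if σ j then (1:ℝ) else -1) * v i j| := Finset.abs_sum_le_sum_abs _ _
    _ ≤ ∑ _j : Fin N, C := Finset.sum_le_sum fun j _ => by rw [sgn_bound]; exact hv i j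
    _ = N * C := by simp [mul_comm]

lemma bddS {v : I → Fin N → ℝ} {C : ℝ} (hv : ∀ i j, |v i j| ≤ C) (σ : Fin N → Bool) :
    BddAbove (Set.range fun i : I => ∑ j : Fin N, (if σ j then (1:ℝ) else -1) * v i j) := by
  refine ⟨N * C, ?_⟩
  rintro _ ⟨i, rfl⟩
  exact le_trans (le_abs_self _) (sum_bound hv σ i)

lemma sRad_add {v w : I → Fin N → ℝ} {C D : ℝ} (hv : ∀ i j, |v i j| ≤ C)
    (hw : ∀ i j, |w i j| ≤ D) :
    sRad N (fun i j => v i j + w i j) ≤ sRad N v + sRad N w := by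
  rw [sRad, sRad, sRad, ← Finset.sum_add_distrib]
  refine Finset.sum_le_sum fun σ _ => ?_
  have h1 : ∀ i : I, ∑ j : Fin N, (if σ j then (1:ℝ) else -1) * (v i j + w i j)
      = (∑ j : Fin N, (if σ j then (1:ℝ) else -1) * v i j)
        + ∑ j : Fin N, (if σ j then (1:ℝ) else -1) * w i j := by
    intro i; rw [← Finset.sum_add_distrib]; exact Finset.sum_congr rfl fun j _ => mul_add _ _ _
  calc (⨆ i : I, ∑ j : Fin N, (if σ j then (1:ℝ) else -1) * (v i j + w i j))
      = ⨆ i : I, ((∑ j : Fin N, (if σ j then (1:ℝ) else -1) * v i j)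
        + ∑ j : Fin N, (if σ j then (1:ℝ) else -1) * w i j) := iSup_congr h1
    _ ≤ _ := ciSup_le fun i => add_le_add (le_ciSup (bddS hv σ) i) (le_ciSup (bddS hw σ) i)

lemma sRad_neg (v : I → Fin N → ℝ) : sRad N (fun i j => -(v i j)) = sRad N v := by
  refine Fintype.sum_equiv ⟨fun σ j => !σ j, fun σ j => !σ j, fun σ => by funext j; simp,
    fun σ => by funext j; simp⟩ _ _ fun σ => ?_
  refine iSup_congr fun i => Finset.sum_congr rfl fun j _ => ?_
  rcases Bool.eq_false_or_eq_true (σ j) with h | h <;> simp [h]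

lemma sRad_two (v : I → Fin N → ℝ) : sRad N (fun i j => 2 * v i j) = 2 * sRad N v := by
  rw [sRad, sRad, Finset.mul_sum]
  refine Finset.sum_congr rfl fun σ _ => ?_
  rw [Real.mul_iSup_of_nonneg (by norm_num : (0:ℝ) ≤ 2)]
  refine iSup_congr fun i => ?_
  rw [Finset.mul_sum]
  exact Finset.sum_congr rfl fun j _ => by ring

lemma sRad_mask {v : I → Fin N → ℝ} {C : ℝ} (hv : ∀ i j, |v i j| ≤ C) (s : Finset (Fin N)) :
    sRad N (fun i j => if j ∈ s then |v i j| else v i j) ≤ sRad N v := by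
  classical
  induction s using Finset.induction_on with
  | empty => simp
  | @insert k s hk ih =>
    have hM : ∀ i j, |if j ∈ s then |v i j| else v i j| ≤ C := fun i j => by
      split
      · rw [abs_abs]; exact hv i j
      · exact hv i j
    have eq1 : (fun (i : I) (j : Fin N) => if j ∈ insert k s then |v i j| else v i j)
        = (fun i j => if j = k then |if j ∈ s then |v i j| else v i j|
            else (if j ∈ s then |v i j| else v i j)) := by
      funext i j
      rcases eq_or_ne j k with rfl | hj
      · simp [hk]
      · simp [Finset.mem_insert, hj]
    rw [eq1]
    exact le_trans (sRad_onecoord hM k) ih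

lemma sRad_abs {v : I → Fin N → ℝ} {C : ℝ} (hv : ∀ i j, |v i j| ≤ C) :
    sRad N (fun i j => |v i j|) ≤ sRad N v := by
  have h := sRad_mask hv Finset.univ
  simpa using h
end more

/-- The empirical Rademacher complexity of the family of functions `h i : Ω → ℝ`, `i : I`,
on the fixed sample `δ 0, …, δ (N-1)`: the expectation, over i.i.d. uniform signs
`σ j ∈ {−1, +1}`, of `sup_{i ∈ I} (1/N) ∑ j σ j • h i (δ j)`. -/
noncomputable def empRad {Ω I : Type*} (N : ℕ) (δ : Fin N → Ω) (h : I → Ω → ℝ) : ℝ :=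
  (∑ σ : Fin N → Bool,
      ⨆ i : I, (1 / N : ℝ) * ∑ j : Fin N, (if σ j then (1 : ℝ) else -1) * h i (δ j)) /
    2 ^ N

theorem stmt_11 {Ω I : Type*} [Nonempty I] (N : ℕ) (δ : Fin N → Ω)
    (f g : I → Ω → ℝ)
    (hf : ∀ i ω, f i ω ∈ Set.Icc (0 : ℝ) 1) (hg : ∀ i ω, g i ω ∈ Set.Icc (0 : ℝ) 1) :
    empRad N δ (fun i ω => max (f i ω) (g i ω)) ≤ empRad N δ f + empRad N δ g := by
  have empEq : ∀ h : I → Ω → ℝ, empRad N δ h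
      = ((1 / N : ℝ) * sRad N (fun i j => h i (δ j))) / 2 ^ N := by
    intro h
    rw [empRad, sRad, Finset.mul_sum]
    congr 1
    refine Finset.sum_congr rfl fun σ _ => ?_
    exact (Real.mul_iSup_of_nonneg (by positivity) _).symm
  set V : I → Fin N → ℝ := fun i j => f i (δ j) with hV
  set W : I → Fin N → ℝ := fun i j => g i (δ j) with hW
  have hVb : ∀ i j, |V i j| ≤ 1 := fun i j => by
    have := hf i (δ j); rw [Set.mem_Icc] at this
    rw [abs_le]; constructor <;> linarith [this.1, this.2]
  have hWb : ∀ i j, |W i j| ≤ 1 := fun i j => by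
    have := hg i (δ j); rw [Set.mem_Icc] at this
    rw [abs_le]; constructor <;> linarith [this.1, this.2]
  have hUb : ∀ i j, |V i j - W i j| ≤ 1 := fun i j => by
    have h1 := abs_le.mp (hVb i j); have h2 := abs_le.mp (hWb i j)
    have := hf i (δ j); rw [Set.mem_Icc] at this
    have h3 := hg i (δ j); rw [Set.mem_Icc] at h3
    rw [abs_le]; constructor <;> linarith [this.1, this.2, h3.1, h3.2]
  have hUabsb : ∀ i j, |(|V i j - W i j|)| ≤ 1 := fun i j => by
    rw [abs_abs]; exact hUb i j
  have hVWb : ∀ i j, |V i j + W i j| ≤ 2 := fun i j => by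
    have h1 := abs_le.mp (hVb i j); have h2 := abs_le.mp (hWb i j)
    rw [abs_le]; constructor <;> linarith [h1.1, h1.2, h2.1, h2.2]
  have idm : (fun (i : I) (j : Fin N) => 2 * max (V i j) (W i j))
      = fun i j => (V i j + W i j) + |V i j - W i j| := by
    funext i j
    rcases le_total (V i j) (W i j) with h | h
    · rw [max_eq_right h, abs_of_nonpos (by linarith)]; ring
    · rw [max_eq_left h, abs_of_nonneg (by linarith)]; ring
  have hnegWb : ∀ i j, |-(W i j)| ≤ 1 := fun i j => by rw [abs_neg]; exact hWb i j
  have core : sRad N (fun i j => max (V i j) (W i j)) ≤ sRad N V + sRad N W := by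
    have step1 : 2 * sRad N (fun i j => max (V i j) (W i j))
        = sRad N (fun i j => (V i j + W i j) + |V i j - W i j|) := by
      rw [← sRad_two, idm]
    have step2 : sRad N (fun i j => (V i j + W i j) + |V i j - W i j|)
        ≤ sRad N (fun i j => V i j + W i j) + sRad N (fun i j => |V i j - W i j|) :=
      sRad_add hVWb hUabsb
    have step3 : sRad N (fun i j => V i j + W i j) ≤ sRad N V + sRad N W :=
      sRad_add hVb hWb
    have step4 : sRad N (fun i j => |V i j - W i j|)
        ≤ sRad N (fun i j => V i j - W i j) := sRad_abs hUb
    have step5 : sRad N (fun i j => V i j - W i j) ≤ sRad N V + sRad N W := by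
      have h1 : (fun (i : I) (j : Fin N) => V i j - W i j)
          = fun i j => V i j + -(W i j) := by funext i j; ring
      rw [h1]
      exact le_trans (sRad_add hVb hnegWb) (by rw [sRad_neg])
    linarith
  rw [empEq, empEq, empEq, ← add_div, ← mul_add]
  have hc : (0:ℝ) ≤ 1 / N := by positivity
  have h2 : (0:ℝ) < 2 ^ N := by positivity
  have hm : (1 / N : ℝ) * sRad N (fun i j => max (f i (δ j)) (g i (δ j)))
      ≤ (1 / N : ℝ) * (sRad N (fun i j => f i (δ j)) + sRad N (fun i j => g i (δ j))) :=
    mul_le_mul_of_nonneg_left core hc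
  exact (div_le_div_iff_of_pos_right h2).mpr hm
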